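/- Let (X,d) be a metric space with a nonnegative Borel measure μ and let p, s be bounded variable exponents. If u ∈ Ṁ^{s(·),p(·)}(X,d,μ) satisfies ‖u‖_{Ṁ^{s(·),p(·)}} = 0 (that is, the infimum of ‖g‖_{L^{p(·)}} over all scalar s(·)-gradients g of u is zero), then u is constant μ-almost everywhere. -/

import Mathlib

open MeasureTheory Metric ENNReal

noncomputable section

/-- The semi-modular `∫ f(x)^{p(x)} dμ` of an `ℝ≥0∞`-valued function. -/
def modE {X : Type*} [MeasurableSpace X] (μ : Measure X) (p : X → ℝ) (f : X → ℝ≥0∞) : ℝ≥0∞ :=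
  ∫⁻ x, f x ^ p x ∂μ

/-- The Luxemburg quasi-norm associated to the variable exponent `p`. -/
def luxE {X : Type*} [MeasurableSpace X] (μ : Measure X) (p : X → ℝ) (f : X → ℝ≥0∞) : ℝ≥0∞ :=
  sInf {l : ℝ≥0∞ | 0 < l ∧ l ≠ ⊤ ∧ modE μ p (fun x => f x / l) ≤ 1}

/-- The Luxemburg quasi-norm of a real-valued function. -/
def luxR {X : Type*} [MeasurableSpace X] (μ : Measure X) (p : X → ℝ) (u : X → ℝ) : ℝ≥0∞ :=
  luxE μ p (fun x => (‖u x‖₊ : ℝ≥0∞))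

/-- `g` is a scalar `s(·)`-gradient of `u` on the set `E`. -/
def IsSGradOn {X : Type*} [MeasurableSpace X] [PseudoMetricSpace X] (μ : Measure X)
    (E : Set X) (s : X → ℝ) (u : X → ℝ) (g : X → ℝ≥0∞) : Prop :=
  Measurable g ∧ ∃ N : Set X, N ⊆ E ∧ μ N = 0 ∧ ∀ x ∈ E \ N, ∀ y ∈ E \ N,
    ENNReal.ofReal |u x - u y| ≤
      ENNReal.ofReal (dist x y ^ s x) * g x + ENNReal.ofReal (dist x y ^ s y) * g y

/-- `{g k}` is a vector (fractional) `s(·)`-gradient of `u` on the set `E`. -/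
def IsVGradOn {X : Type*} [MeasurableSpace X] [PseudoMetricSpace X] (μ : Measure X)
    (E : Set X) (s : X → ℝ) (u : X → ℝ) (g : ℤ → X → ℝ≥0∞) : Prop :=
  (∀ k, Measurable (g k)) ∧ ∃ N : Set X, N ⊆ E ∧ μ N = 0 ∧
    ∀ x ∈ E \ N, ∀ y ∈ E \ N, ∀ k : ℤ,
      (2 : ℝ) ^ (-(k : ℝ) - 1) ≤ dist x y → dist x y < (2 : ℝ) ^ (-(k : ℝ)) →
      ENNReal.ofReal |u x - u y| ≤
        ENNReal.ofReal (dist x y ^ s x) * g k x + ENNReal.ofReal (dist x y ^ s y) * g k y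

/-- Pointwise `ℓ^{q}`-norm of a sequence, `q ∈ (0,∞]`. -/
def seqNormE (q : ℝ≥0∞) (v : ℤ → ℝ≥0∞) : ℝ≥0∞ :=
  if q = ⊤ then ⨆ k, v k else (∑' k, v k ^ q.toReal) ^ (1 / q.toReal)

/-- The mixed `L^{p(·)}(ℓ^{q(·)})` quasi-norm. -/
def LpEllNorm {X : Type*} [MeasurableSpace X] (μ : Measure X) (p : X → ℝ) (q : X → ℝ≥0∞)
    (g : ℤ → X → ℝ≥0∞) : ℝ≥0∞ :=
  luxE μ p (fun x => seqNormE (q x) (fun k => g k x))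

/-- The semi-modular of the mixed `ℓ^{q(·)}(L^{p(·)})` space. -/
def ellLpMod {X : Type*} [MeasurableSpace X] (μ : Measure X) (p : X → ℝ) (q : X → ℝ≥0∞)
    (g : ℤ → X → ℝ≥0∞) : ℝ≥0∞ :=
  ∑' k : ℤ, sInf {l : ℝ≥0∞ | 0 < l ∧ l ≠ ⊤ ∧
    modE μ p (fun x => g k x / l ^ (1 / q x).toReal) ≤ 1}

/-- The mixed `ℓ^{q(·)}(L^{p(·)})` quasi-norm. -/
def ellLpNorm {X : Type*} [MeasurableSpace X] (μ : Measure X) (p : X → ℝ) (q : X → ℝ≥0∞)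
    (g : ℤ → X → ℝ≥0∞) : ℝ≥0∞ :=
  sInf {l : ℝ≥0∞ | 0 < l ∧ l ≠ ⊤ ∧ ellLpMod μ p q (fun k x => g k x / l) ≤ 1}

/-- Quasi-seminorm of the homogeneous variable Hajłasz–Sobolev space `Ṁ^{s(·),p(·)}(E)`. -/
def MNormOn {X : Type*} [MeasurableSpace X] [PseudoMetricSpace X] (μ : Measure X)
    (E : Set X) (p s : X → ℝ) (u : X → ℝ) : ℝ≥0∞ :=
  sInf ((fun g => luxE (μ.restrict E) p g) '' {g | IsSGradOn μ E s u g})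

/-- Quasi-seminorm of the homogeneous Hajłasz–Triebel–Lizorkin space `Ṁ^{s(·)}_{p(·),q(·)}(E)`. -/
def TLNormOn {X : Type*} [MeasurableSpace X] [PseudoMetricSpace X] (μ : Measure X)
    (E : Set X) (p : X → ℝ) (q : X → ℝ≥0∞) (s : X → ℝ) (u : X → ℝ) : ℝ≥0∞ :=
  sInf ((fun g => LpEllNorm (μ.restrict E) p q g) '' {g | IsVGradOn μ E s u g})

/-- Quasi-seminorm of the homogeneous Hajłasz–Besov space `Ṅ^{s(·)}_{p(·),q(·)}(E)`. -/
def BNormOn {X : Type*} [MeasurableSpace X] [PseudoMetricSpace X] (μ : Measure X)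
    (E : Set X) (p : X → ℝ) (q : X → ℝ≥0∞) (s : X → ℝ) (u : X → ℝ) : ℝ≥0∞ :=
  sInf ((fun g => ellLpNorm (μ.restrict E) p q g) '' {g | IsVGradOn μ E s u g})


/-- If `u` has vanishing homogeneous Hajłasz–Sobolev quasi-seminorm — i.e. the infimum over all
scalar `s(·)`-gradients `g` of `u` of `‖g‖_{L^{p(·)}}` equals zero — then `u` is constant
`μ`-a.e. -/
theorem constant_of_zero_hajlasz_seminorm {X : Type*} [MetricSpace X] [MeasurableSpace X]
    [BorelSpace X] (μ : Measure X) (p s : X → ℝ)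
    (hp : ∃ c C : ℝ, 0 < c ∧ ∀ x, c ≤ p x ∧ p x ≤ C)
    (hs : ∃ c C : ℝ, 0 < c ∧ ∀ x, c ≤ s x ∧ s x ≤ C)
    (u : X → ℝ) (hu : Measurable u)
    (hzero : sInf ((fun g => luxE μ p g) '' {g | IsSGradOn μ Set.univ s u g}) = 0) :
    ∃ c : ℝ, ∀ᵐ x ∂μ, u x = c := by
  classical
  obtain ⟨c, C, hc0, hpc⟩ := hp
  -- geometric sequence
  set δ : ℕ → ℝ≥0∞ := fun n => (2⁻¹ : ℝ≥0∞) ^ n with hδdef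
  have hδ0 : ∀ n, δ n ≠ 0 := fun n => pow_ne_zero n (by norm_num)
  have hδtop : ∀ n, δ n ≠ ⊤ := fun n => pow_ne_top (by norm_num)
  have hδ1 : ∀ n, δ n ≤ 1 := fun n => pow_le_one' (by norm_num) n
  -- choose gradients with small Luxemburg norm
  have hex : ∀ n : ℕ, ∃ g, IsSGradOn μ Set.univ s u g ∧ luxE μ p g < δ n * δ n ^ (1 / c) := by
    intro n
    have hpos : (0 : ℝ≥0∞) < δ n * δ n ^ (1 / c) := by
      apply ENNReal.mul_pos (hδ0 n)
      exact (ENNReal.rpow_pos (lt_of_le_of_ne (zero_le) (Ne.symm (hδ0 n))) (hδtop n)).ne'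
    obtain ⟨a, ⟨g, hg, rfl⟩, ha⟩ := sInf_lt_iff.mp (hzero ▸ hpos)
    exact ⟨g, hg, ha⟩
  choose g hg hglux using hex
  have hl : ∀ n, ∃ l : ℝ≥0∞, 0 < l ∧ l ≠ ⊤ ∧
      modE μ p (fun x => g n x / l) ≤ 1 ∧ l < δ n * δ n ^ (1 / c) := by
    intro n
    obtain ⟨l, hlmem, hlt⟩ := sInf_lt_iff.mp (hglux n)
    exact ⟨l, hlmem.1, hlmem.2.1, hlmem.2.2, hlt⟩
  choose l hl0 hltop hmod hlsmall using hl
  -- Chebyshev: μ {x | δ n ≤ g n x} ≤ δ n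
  have hcheb : ∀ n, μ {x | δ n ≤ g n x} ≤ δ n := by
    intro n
    have hlδ : l n ≤ δ n := by
      refine le_trans (hlsmall n).le ?_
      calc δ n * δ n ^ (1 / c) ≤ δ n * 1 := by
            gcongr
            exact ENNReal.rpow_le_one (hδ1 n) (by positivity)
        _ = δ n := mul_one _
    have hdiv1 : (1 : ℝ≥0∞) ≤ δ n / l n := by
      rw [ENNReal.le_div_iff_mul_le (Or.inl (hl0 n).ne') (Or.inl (hltop n)), one_mul]
      exact hlδ
    set S : Set X := {x | δ n ≤ g n x} with hS
    have hSmeas : MeasurableSet S := measurableSet_le measurable_const (hg n).1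
    have hkey : (δ n / l n) ^ c * μ S ≤ 1 := by
      have h1 : (δ n / l n) ^ c * μ S = ∫⁻ _ in S, (δ n / l n) ^ c ∂μ :=
        (setLIntegral_const S _).symm
      have h2 : ∫⁻ _ in S, (δ n / l n) ^ c ∂μ ≤ ∫⁻ x in S, (g n x / l n) ^ p x ∂μ := by
        refine lintegral_mono_ae ?_
        filter_upwards [ae_restrict_mem hSmeas] with x hx
        calc (δ n / l n) ^ c ≤ (δ n / l n) ^ p x :=
              ENNReal.rpow_le_rpow_of_exponent_le hdiv1 (hpc x).1
          _ ≤ (g n x / l n) ^ p x := by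
              gcongr
              · exact le_trans hc0.le (hpc x).1
              · exact hx
      have h3 : ∫⁻ x in S, (g n x / l n) ^ p x ∂μ ≤ ∫⁻ x, (g n x / l n) ^ p x ∂μ :=
        setLIntegral_le_lintegral S _
      exact h1 ▸ le_trans (le_trans h2 h3) (hmod n)
    have hμS : μ S ≤ ((δ n / l n) ^ c)⁻¹ := by
      rw [ENNReal.le_inv_iff_mul_le]
      calc μ S * (δ n / l n) ^ c = (δ n / l n) ^ c * μ S := mul_comm _ _
        _ ≤ 1 := hkey
    refine le_trans hμS ?_
    rw [← ENNReal.inv_rpow, ENNReal.inv_div (Or.inl (hltop n)) (Or.inl (hl0 n).ne')]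
    have hld : l n / δ n ≤ δ n ^ (1 / c) := by
      rw [ENNReal.div_le_iff_le_mul (Or.inl (hδ0 n)) (Or.inl (hδtop n))]
      exact le_trans (hlsmall n).le (by rw [mul_comm])
    calc (l n / δ n) ^ c ≤ (δ n ^ (1 / c)) ^ c := ENNReal.rpow_le_rpow hld hc0.le
      _ = δ n ^ ((1 / c) * c) := (ENNReal.rpow_mul _ _ _).symm
      _ = δ n := by rw [one_div_mul_cancel hc0.ne', ENNReal.rpow_one]
  -- Borel–Cantelli
  have hsum : (∑' n, μ {x | δ n ≤ g n x}) ≠ ⊤ := by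
    refine ne_top_of_le_ne_top ?_ (ENNReal.tsum_le_tsum hcheb)
    rw [hδdef, ENNReal.tsum_geometric]
    simp [ENNReal.sub_eq_of_eq_add]
  have hBC : ∀ᵐ x ∂μ, ∀ᶠ n in Filter.atTop, x ∉ {y | δ n ≤ g n y} :=
    MeasureTheory.ae_eventually_notMem hsum
  -- null sets of the gradients
  have hN : ∀ n, ∃ N : Set X, μ N = 0 ∧ ∀ x ∈ Set.univ \ N, ∀ y ∈ Set.univ \ N,
      ENNReal.ofReal |u x - u y| ≤
        ENNReal.ofReal (dist x y ^ s x) * g n x + ENNReal.ofReal (dist x y ^ s y) * g n y := by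
    intro n
    obtain ⟨-, N, -, hN0, hNineq⟩ := hg n
    exact ⟨N, hN0, hNineq⟩
  choose N hN0 hNineq using hN
  have hNae : ∀ᵐ x ∂μ, ∀ n, x ∉ N n := by
    rw [MeasureTheory.ae_all_iff]
    intro n
    rw [MeasureTheory.ae_iff]
    simpa using hN0 n
  have hδtend : Filter.Tendsto δ Filter.atTop (nhds 0) :=
    ENNReal.tendsto_pow_atTop_nhds_zero_of_lt_one (by norm_num)
  -- the good set
  have hgood : ∀ᵐ x ∂μ, (∀ᶠ n in Filter.atTop, g n x < δ n) ∧ ∀ n, x ∉ N n := by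
    filter_upwards [hBC, hNae] with x h1 h2
    refine ⟨?_, h2⟩
    filter_upwards [h1] with n hn
    exact not_le.mp hn
  -- any two good points have equal values
  have hclaim : ∀ x, ((∀ᶠ n in Filter.atTop, g n x < δ n) ∧ ∀ n, x ∉ N n) →
      ∀ y, ((∀ᶠ n in Filter.atTop, g n y < δ n) ∧ ∀ n, y ∉ N n) → u x = u y := by
    intro x hx y hy
    set K : ℝ≥0∞ := ENNReal.ofReal (dist x y ^ s x) + ENNReal.ofReal (dist x y ^ s y) with hK
    have hKtop : K ≠ ⊤ := by
      simp [hK]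
    have hev : ∀ᶠ n in Filter.atTop, ENNReal.ofReal |u x - u y| ≤ K * δ n := by
      filter_upwards [hx.1, hy.1] with n hnx hny
      calc ENNReal.ofReal |u x - u y|
          ≤ ENNReal.ofReal (dist x y ^ s x) * g n x + ENNReal.ofReal (dist x y ^ s y) * g n y :=
            hNineq n x ⟨Set.mem_univ x, hx.2 n⟩ y ⟨Set.mem_univ y, hy.2 n⟩
        _ ≤ ENNReal.ofReal (dist x y ^ s x) * δ n + ENNReal.ofReal (dist x y ^ s y) * δ n :=
            add_le_add (mul_le_mul_right hnx.le _) (mul_le_mul_right hny.le _)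
        _ = K * δ n := by rw [hK, add_mul]
    have htend : Filter.Tendsto (fun n => K * δ n) Filter.atTop (nhds 0) := by
      have := ENNReal.Tendsto.const_mul hδtend (Or.inr hKtop)
      simpa using this
    have h0 : ENNReal.ofReal |u x - u y| ≤ 0 := ge_of_tendsto htend hev
    have : |u x - u y| ≤ 0 := by
      rwa [le_zero_iff, ENNReal.ofReal_eq_zero] at h0
    have := abs_nonpos_iff.mp this
    linarith [sub_eq_zero.mp this]
  by_cases hxe : ∃ x₀, (∀ᶠ n in Filter.atTop, g n x₀ < δ n) ∧ ∀ n, x₀ ∉ N n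
  · obtain ⟨x₀, hx₀⟩ := hxe
    refine ⟨u x₀, ?_⟩
    filter_upwards [hgood] with x hx
    exact hclaim x hx x₀ hx₀
  · refine ⟨0, ?_⟩
    filter_upwards [hgood] with x hx
    exact absurd ⟨x, hx⟩ hxe


end
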